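/- For every integer n ≥ 2 and every s ∈ {1,…,n}, v^n(s) > v^n(s-1): the value function of the uniform-distribution cooperative oligopoly game is strictly increasing in coalition size. -/

import Mathlib

/-- Stirling number of the second kind (as a real number):
`K m j = (1/j!) · Σ_{i=0}^{j} (-1)^i · C(j,i) · (j-i)^m`. -/
noncomputable def K (m j : ℕ) : ℝ :=
  (1 / (Nat.factorial j : ℝ)) *
    ∑ i ∈ Finset.range (j + 1), (-1 : ℝ) ^ i * (Nat.choose j i : ℝ) * ((j - i : ℕ) : ℝ) ^ m


/-- Bell number `B m = Σ_{j=1}^{m} K m j`. -/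
noncomputable def B (m : ℕ) : ℝ := ∑ j ∈ Finset.Icc 1 m, K m j

/-- Uniform partition distribution: `f n s j = K (n-s) j / B (n-s)`. -/
noncomputable def f (n s j : ℕ) : ℝ := K (n - s) j / B (n - s)

/-- `F n s = Σ_{j=1}^{n-s} j · f n s j / (j+1)`. -/
noncomputable def F (n s : ℕ) : ℝ :=
  ∑ j ∈ Finset.Icc 1 (n - s), (j : ℝ) * f n s j / ((j : ℝ) + 1)

/-- Value of a coalition of size `s` in the `n`-firm uniform-distribution game:
`v^n(n) = (a-c)²/4`, `v^n(0) = 0`, and for `1 ≤ s ≤ n-1`,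
`v^n(s) = (a-c)² · (1-F)/(2-F)² · Σ_{j=1}^{n-s} f n s j / (j+1)`. -/
noncomputable def v (a c : ℝ) (n s : ℕ) : ℝ :=
  if s = n then (a - c) ^ 2 / 4
  else if s = 0 then 0
  else (a - c) ^ 2 * ((1 - F n s) / (2 - F n s) ^ 2) *
    ∑ j ∈ Finset.Icc 1 (n - s), f n s j / ((j : ℝ) + 1)

noncomputable def Ksum (m j : ℕ) : ℝ :=
  ∑ i ∈ Finset.range (j + 1), (-1 : ℝ) ^ i * (Nat.choose j i : ℝ) * ((j - i : ℕ) : ℝ) ^ m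

lemma K_eq_Ksum (m j : ℕ) : K m j = Ksum m j / (Nat.factorial j : ℝ) := by
  unfold K Ksum; ring

lemma Ksum_rec (m j : ℕ) :
    Ksum (m+1) (j+1) = (j+1 : ℝ) * Ksum m (j+1) + (j+1 : ℝ) * Ksum m j := by
  have h1 : Ksum (m+1) (j+1)
      = (j+1 : ℝ) * Ksum m (j+1)
        - ∑ i ∈ Finset.range (j+2),
            (i : ℝ) * ((-1:ℝ)^i * (Nat.choose (j+1) i : ℝ) * ((j+1 - i : ℕ) : ℝ) ^ m) := by
    unfold Ksum
    rw [Finset.mul_sum, ← Finset.sum_sub_distrib]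
    apply Finset.sum_congr rfl
    intro i hi
    have hile : i ≤ j + 1 := Nat.lt_succ_iff.mp (Finset.mem_range.mp hi)
    have hc : ((j + 1 - i : ℕ) : ℝ) = (j+1 : ℝ) - (i : ℝ) := by
      push_cast [Nat.cast_sub hile]; ring
    rw [pow_succ, hc]; ring
  have h2 : ∑ i ∈ Finset.range (j+2),
        (i : ℝ) * ((-1:ℝ)^i * (Nat.choose (j+1) i : ℝ) * ((j+1 - i : ℕ) : ℝ) ^ m)
      = -((j+1 : ℝ) * Ksum m j) := by
    rw [Finset.sum_range_succ']
    simp only [Nat.cast_zero, zero_mul, add_zero]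
    unfold Ksum
    rw [Finset.mul_sum, ← Finset.sum_neg_distrib]
    apply Finset.sum_congr rfl
    intro i hi
    have hch : ((i+1 : ℕ) : ℝ) * (Nat.choose (j+1) (i+1) : ℝ) = (j+1 : ℝ) * (Nat.choose j i : ℝ) := by
      have h' : (Nat.succ j * Nat.choose j i : ℕ) = (Nat.choose (j+1) (i+1) * (i+1) : ℕ) :=
        Nat.add_one_mul_choose_eq j i
      have := congrArg (fun x : ℕ => (x : ℝ)) h'
      push_cast at this ⊢
      linarith
    have hsub : (j + 1 - (i+1) : ℕ) = (j - i : ℕ) := by omega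
    rw [hsub, pow_succ]
    push_cast at hch ⊢
    linear_combination (-((-1:ℝ)^i * ((j - i : ℕ) : ℝ) ^ m)) * hch
  rw [h1, h2]; ring

lemma K_rec (m j : ℕ) : K (m+1) (j+1) = (j+1 : ℝ) * K m (j+1) + K m j := by
  have hf : (Nat.factorial (j+1) : ℝ) = (j+1 : ℝ) * (Nat.factorial j : ℝ) := by
    rw [Nat.factorial_succ]; push_cast; ring
  have hj1 : (Nat.factorial (j+1) : ℝ) ≠ 0 := Nat.cast_ne_zero.mpr (Nat.factorial_ne_zero _)
  have hj : (Nat.factorial j : ℝ) ≠ 0 := Nat.cast_ne_zero.mpr (Nat.factorial_ne_zero _)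
  have hj1' : (j : ℝ) + 1 ≠ 0 := by positivity
  rw [K_eq_Ksum, K_eq_Ksum, K_eq_Ksum, Ksum_rec, hf]
  field_simp

/-- Stirling numbers of the second kind, as natural numbers. -/
def St : ℕ → ℕ → ℕ
  | 0, 0 => 1
  | 0, _ + 1 => 0
  | _ + 1, 0 => 0
  | m + 1, j + 1 => (j + 1) * St m (j + 1) + St m j

lemma K_eq_St (m j : ℕ) : K m j = (St m j : ℝ) := by
  induction m generalizing j with
  | zero =>
    match j with
    | 0 => simp [K, St]
    | j + 1 =>
      show K 0 (j+1) = ((0 : ℕ) : ℝ)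
      rw [K_eq_Ksum]
      have : Ksum 0 (j+1) = 0 := by
        unfold Ksum
        simp only [pow_zero, mul_one]
        have := Int.alternating_sum_range_choose_of_ne (n := j+1) (by omega)
        have := congrArg (fun x : ℤ => (x : ℝ)) this
        push_cast at this
        rw [← this]
      rw [this]; simp
  | succ m ih =>
    match j with
    | 0 =>
      show K (m+1) 0 = ((0:ℕ) : ℝ)
      unfold K
      simp
    | j + 1 =>
      rw [K_rec, ih, ih]
      show _ = ((((j + 1) * St m (j + 1) + St m j : ℕ)) : ℝ)
      push_cast
      ring

lemma St_zero {m : ℕ} (hm : 1 ≤ m) : St m 0 = 0 := by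
  match m, hm with
  | m + 1, _ => rfl

lemma St_one {m : ℕ} (hm : 1 ≤ m) : St m 1 = 1 := by
  induction m with
  | zero => omega
  | succ m ih =>
    show 1 * St m 1 + St m 0 = 1
    match m with
    | 0 => rfl
    | m + 1 => rw [ih (by omega), St_zero (by omega)]

lemma St_of_lt : ∀ {m j : ℕ}, m < j → St m j = 0 := by
  intro m
  induction m with
  | zero => intro j hj; match j, hj with | j + 1, _ => rfl
  | succ m ih =>
    intro j hj
    match j, hj with
    | j + 1, hj =>
      show (j + 1) * St m (j + 1) + St m j = 0
      rw [ih (by omega), ih (by omega)]; ring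

/-- range-indexed Bell-type sums -/
noncomputable def Bn (m : ℕ) : ℝ := ∑ i ∈ Finset.range m, (St m (1 + i) : ℝ)
noncomputable def Sn (m : ℕ) : ℝ := ∑ i ∈ Finset.range m, (St m (1 + i) : ℝ) / (i + 2)
noncomputable def An (m : ℕ) : ℝ := ∑ i ∈ Finset.range m, ((1 + i : ℕ) : ℝ) * (St m (1 + i) : ℝ)
noncomputable def Tn (m : ℕ) : ℝ := ∑ i ∈ Finset.range m, (St m (1 + i) : ℝ) / (i + 3)

lemma St_succ (m j : ℕ) : St (m+1) (j+1) = (j+1) * St m (j+1) + St m j := rfl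

lemma Bn_succ {m : ℕ} (hm : 1 ≤ m) : Bn (m+1) = An m + Bn m := by
  unfold Bn An
  have h : ∀ i ∈ Finset.range (m+1),
      (St (m+1) (1+i) : ℝ) = ((1+i : ℕ) : ℝ) * (St m (1+i) : ℝ) + (St m i : ℝ) := by
    intro i _
    have h1 : 1 + i = i + 1 := Nat.add_comm 1 i
    rw [h1, St_succ]
    push_cast; ring
  rw [Finset.sum_congr rfl h, Finset.sum_add_distrib]
  congr 1
  · rw [Finset.sum_range_succ, St_of_lt (by omega)]
    simp
  · rw [Finset.sum_range_succ', St_zero hm]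
    simp [Nat.add_comm]

lemma Sn_succ {m : ℕ} (hm : 1 ≤ m) : Sn (m+1) = Bn m - Sn m + Tn m := by
  unfold Sn
  have h : ∀ i ∈ Finset.range (m+1),
      (St (m+1) (1+i) : ℝ) / (i+2)
        = (((1+i : ℕ) : ℝ) * (St m (1+i) : ℝ)) / (i+2) + (St m i : ℝ) / (i+2) := by
    intro i _
    have h1 : 1 + i = i + 1 := Nat.add_comm 1 i
    rw [h1, St_succ]
    push_cast; ring
  rw [Finset.sum_congr rfl h, Finset.sum_add_distrib]
  congr 1
  · rw [Finset.sum_range_succ, St_of_lt (by omega)]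
    simp only [Nat.cast_zero, mul_zero, zero_div, add_zero, zero_mul]
    simp only [Bn, Sn]
    rw [← Finset.sum_sub_distrib]
    apply Finset.sum_congr rfl
    intro i _
    have h2 : ((i:ℝ) + 2) ≠ 0 := by positivity
    push_cast
    field_simp
    ring
  · rw [Finset.sum_range_succ', St_zero hm]
    simp only [Nat.cast_zero, zero_div, add_zero]
    unfold Tn
    apply Finset.sum_congr rfl
    intro i _
    have h1 : 1 + i = i + 1 := Nat.add_comm 1 i
    rw [h1]
    push_cast
    ring_nf

lemma Bn_pos {m : ℕ} (hm : 1 ≤ m) : 0 < Bn m := by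
  unfold Bn
  apply Finset.sum_pos'
  · intro i _; positivity
  · exact ⟨0, Finset.mem_range.mpr (by omega), by rw [St_one hm]; norm_num⟩

lemma Sn_pos {m : ℕ} (hm : 1 ≤ m) : 0 < Sn m := by
  unfold Sn
  apply Finset.sum_pos'
  · intro i _; positivity
  · exact ⟨0, Finset.mem_range.mpr (by omega), by rw [St_one hm]; norm_num⟩

lemma Sn_lt_Bn {m : ℕ} (hm : 1 ≤ m) : Sn m < Bn m := by
  unfold Sn Bn
  apply Finset.sum_lt_sum
  · intro i _
    apply div_le_self (by positivity)
    have : (0:ℝ) ≤ (i:ℝ) := Nat.cast_nonneg i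
    linarith
  · exact ⟨0, Finset.mem_range.mpr (by omega), by rw [St_one hm]; norm_num⟩

lemma Tn_lt_Sn {m : ℕ} (hm : 1 ≤ m) : Tn m < Sn m := by
  unfold Tn Sn
  apply Finset.sum_lt_sum
  · intro i _
    rw [div_eq_mul_one_div ((St m (1+i):ℝ)), div_eq_mul_one_div ((St m (1+i):ℝ))]
    apply mul_le_mul_of_nonneg_left _ (by positivity)
    exact one_div_le_one_div_of_le (by positivity) (by linarith [Nat.cast_nonneg (α := ℝ) i])
  · refine ⟨0, Finset.mem_range.mpr (by omega), ?_⟩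
    rw [St_one hm]; norm_num

lemma cheb_gen (s : Finset ℕ) (w a b : ℕ → ℝ) (hw : ∀ i ∈ s, 0 ≤ w i)
    (hab : ∀ i ∈ s, ∀ k ∈ s, 0 ≤ (a i - a k) * (b k - b i)) :
    (∑ i ∈ s, w i) * (∑ i ∈ s, w i * (a i * b i))
      ≤ (∑ i ∈ s, w i * a i) * (∑ i ∈ s, w i * b i) := by
  have key : 0 ≤ ∑ i ∈ s, ∑ k ∈ s, w i * w k * ((a i - a k) * (b k - b i)) :=
    Finset.sum_nonneg fun i hi => Finset.sum_nonneg fun k hk =>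
      mul_nonneg (mul_nonneg (hw i hi) (hw k hk)) (hab i hi k hk)
  have h1 : ∀ i ∈ s, ∑ k ∈ s, w i * w k * ((a i - a k) * (b k - b i))
      = (w i * a i) * (∑ k ∈ s, w k * b k) - (w i * (a i * b i)) * (∑ k ∈ s, w k)
        - w i * (∑ k ∈ s, w k * (a k * b k)) + (w i * b i) * (∑ k ∈ s, w k * a k) := by
    intro i _
    rw [Finset.mul_sum, Finset.mul_sum, Finset.mul_sum, Finset.mul_sum,
      ← Finset.sum_sub_distrib, ← Finset.sum_sub_distrib, ← Finset.sum_add_distrib]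
    apply Finset.sum_congr rfl
    intro k _
    ring
  rw [Finset.sum_congr rfl h1, Finset.sum_add_distrib, Finset.sum_sub_distrib,
    Finset.sum_sub_distrib, ← Finset.sum_mul, ← Finset.sum_mul, ← Finset.sum_mul,
    ← Finset.sum_mul] at key
  nlinarith [key]

lemma cheb {m : ℕ} : Bn m * (Bn m - Sn m) ≤ An m * Sn m := by
  have h := cheb_gen (Finset.range m) (fun i => (St m (1+i) : ℝ))
    (fun i => (i : ℝ) + 1) (fun i => 1 / ((i : ℝ) + 2))
    (fun i _ => by positivity)
    (fun i _ k _ => by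
      show 0 ≤ ((i:ℝ)+1 - ((k:ℝ)+1)) * (1/((k:ℝ)+2) - 1/((i:ℝ)+2))
      have h2 : (0:ℝ) < (i:ℝ)+2 := by positivity
      have h3 : (0:ℝ) < (k:ℝ)+2 := by positivity
      have hkey : ((i:ℝ)+1 - ((k:ℝ)+1)) * (1/((k:ℝ)+2) - 1/((i:ℝ)+2))
          = ((i:ℝ)-(k:ℝ))^2 / (((k:ℝ)+2)*((i:ℝ)+2)) := by
        field_simp
        ring
      rw [hkey]
      positivity)
  have e1 : ∑ i ∈ Finset.range m, (St m (1+i) : ℝ) = Bn m := rfl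
  have e2 : ∑ i ∈ Finset.range m, (St m (1+i) : ℝ) * (((i:ℝ)+1) * (1/((i:ℝ)+2)))
      = Bn m - Sn m := by
    unfold Bn Sn
    rw [← Finset.sum_sub_distrib]
    apply Finset.sum_congr rfl
    intro i _
    have h2 : ((i:ℝ) + 2) ≠ 0 := by positivity
    field_simp
    ring
  have e3 : ∑ i ∈ Finset.range m, (St m (1+i) : ℝ) * ((i:ℝ)+1) = An m := by
    unfold An
    apply Finset.sum_congr rfl
    intro i _
    push_cast; ring
  have e4 : ∑ i ∈ Finset.range m, (St m (1+i) : ℝ) * (1/((i:ℝ)+2)) = Sn m := by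
    unfold Sn
    apply Finset.sum_congr rfl
    intro i _
    ring
  rw [e1, e2, e3, e4] at h
  exact h

lemma main_ineq {m : ℕ} (hm : 1 ≤ m) : Sn (m+1) * Bn m < Sn m * Bn (m+1) := by
  have h1 := Bn_succ hm
  have h2 := Sn_succ hm
  have h3 := cheb (m := m)
  have h4 := Tn_lt_Sn hm
  have h5 := Bn_pos hm
  rw [h1, h2]
  nlinarith [mul_pos h5 (sub_pos.mpr h4)]


lemma Icc_sum (g : ℕ → ℝ) (m : ℕ) :
    ∑ j ∈ Finset.Icc 1 m, g j = ∑ i ∈ Finset.range m, g (1 + i) := by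
  rw [← Finset.Ico_add_one_right_eq_Icc, Finset.sum_Ico_eq_sum_range]
  simp

lemma B_eq (m : ℕ) : B m = Bn m := by
  unfold B Bn
  rw [Icc_sum]
  exact Finset.sum_congr rfl fun i _ => K_eq_St m (1+i)

lemma v_formula (a c : ℝ) {n s : ℕ} (hs1 : 1 ≤ s) (hsn : s < n) :
    v a c n s = (a - c) ^ 2 * (Sn (n-s) / (Bn (n-s) + Sn (n-s))) ^ 2 := by
  have hm : 1 ≤ n - s := by omega
  have hBpos := Bn_pos hm
  have hSpos := Sn_pos hm
  have hBne : Bn (n-s) ≠ 0 := ne_of_gt hBpos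
  have hBSne : Bn (n-s) + Sn (n-s) ≠ 0 := by positivity
  unfold v
  rw [if_neg (by omega), if_neg (by omega)]
  have hF : F n s = (Bn (n-s) - Sn (n-s)) / Bn (n-s) := by
    unfold F f
    rw [B_eq, Icc_sum]
    have h : ∀ i ∈ Finset.range (n-s),
        ((1+i : ℕ) : ℝ) * (K (n-s) (1+i) / Bn (n-s)) / (((1+i : ℕ) : ℝ) + 1)
          = ((St (n-s) (1+i) : ℝ) - (St (n-s) (1+i) : ℝ) / ((i:ℝ)+2)) / Bn (n-s) := by
      intro i _
      rw [K_eq_St]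
      have h2 : ((i:ℝ) + 2) ≠ 0 := by positivity
      push_cast
      field_simp
      ring
    rw [Finset.sum_congr rfl h, ← Finset.sum_div, Finset.sum_sub_distrib]
    rfl
  have hsum : ∑ j ∈ Finset.Icc 1 (n-s), f n s j / ((j : ℝ) + 1)
      = Sn (n-s) / Bn (n-s) := by
    unfold f
    rw [B_eq, Icc_sum]
    have h : ∀ i ∈ Finset.range (n-s),
        K (n-s) (1+i) / Bn (n-s) / (((1+i : ℕ) : ℝ) + 1)
          = (St (n-s) (1+i) : ℝ) / ((i:ℝ)+2) / Bn (n-s) := by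
      intro i _
      rw [K_eq_St]
      push_cast
      ring
    rw [Finset.sum_congr rfl h, ← Finset.sum_div]
    rfl
  rw [hF, hsum]
  have h1F : 1 - (Bn (n-s) - Sn (n-s)) / Bn (n-s) = Sn (n-s) / Bn (n-s) := by
    field_simp
    ring
  have h2F : 2 - (Bn (n-s) - Sn (n-s)) / Bn (n-s) = (Bn (n-s) + Sn (n-s)) / Bn (n-s) := by
    field_simp
    ring
  rw [h1F, h2F]
  field_simp

/-- for every `n ≥ 2` and `s ∈ {1,…,n}`, `v^n(s) > v^n(s-1)`:
the value function is strictly increasing in coalition size. -/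
theorem stmt3 (a c : ℝ) (hc : 0 < c) (hca : c < a) (n : ℕ) (hn : 2 ≤ n) :
    ∀ s ∈ Finset.Icc 1 n, v a c n (s - 1) < v a c n s := by
  intro s hs
  obtain ⟨hs1, hsn⟩ := Finset.mem_Icc.mp hs
  have hac : (0:ℝ) < (a - c) ^ 2 := pow_pos (sub_pos.mpr hca) 2
  rcases eq_or_lt_of_le hsn with rfl | hlt
  · -- s = n
    have hvn : v a c s s = (a-c)^2/4 := by unfold v; rw [if_pos rfl]
    have hm1 : s - (s-1) = 1 := by omega
    have hv1 : v a c s (s-1) = (a-c)^2 * (Sn 1 / (Bn 1 + Sn 1))^2 :=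
      v_formula a c (by omega) (by omega) |>.trans (by rw [hm1])
    have hB1 : Bn 1 = 1 := by
      unfold Bn
      rw [Finset.sum_range_one]
      norm_num [St_one]
    have hS1 : Sn 1 = 1/2 := by
      unfold Sn
      rw [Finset.sum_range_one]
      rw [St_one (le_refl 1)]
      norm_num
    rw [hvn, hv1, hB1, hS1]
    norm_num
    nlinarith
  · -- s < n
    rcases Nat.eq_or_lt_of_le hs1 with rfl | hs2
    · -- s = 1
      have h0 : v a c n (1-1) = 0 := by
        unfold v
        rw [if_neg (by omega), if_pos rfl]
      have hm : 1 ≤ n - 1 := by omega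
      have hv1 : v a c n 1 = (a-c)^2 * (Sn (n-1) / (Bn (n-1) + Sn (n-1)))^2 :=
        v_formula a c le_rfl (by omega)
      rw [h0, hv1]
      have p1 := Bn_pos hm
      have p2 := Sn_pos hm
      exact mul_pos hac (pow_pos (div_pos p2 (by linarith)) 2)
    · -- 2 ≤ s
      have hm : 1 ≤ n - s := by omega
      have hms : n - (s-1) = (n-s) + 1 := by omega
      have hv1 : v a c n (s-1) = (a-c)^2 * (Sn ((n-s)+1) / (Bn ((n-s)+1) + Sn ((n-s)+1)))^2 :=
        (v_formula a c (by omega) (by omega)).trans (by rw [hms])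
      have hv2 : v a c n s = (a-c)^2 * (Sn (n-s) / (Bn (n-s) + Sn (n-s)))^2 :=
        v_formula a c (by omega) hlt
      rw [hv1, hv2]
      set m := n - s with hmdef
      have key := main_ineq hm
      have p1 := Bn_pos hm
      have p2 := Sn_pos hm
      have p3 := Bn_pos (m := m+1) (by omega)
      have p4 := Sn_pos (m := m+1) (by omega)
      have hr : Sn (m+1) / (Bn (m+1) + Sn (m+1)) < Sn m / (Bn m + Sn m) := by
        rw [div_lt_div_iff₀ (by positivity) (by positivity)]
        nlinarith
      have hr0 : 0 ≤ Sn (m+1) / (Bn (m+1) + Sn (m+1)) := by positivity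
      exact mul_lt_mul_of_pos_left (pow_lt_pow_left₀ hr hr0 (by norm_num)) hac
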